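/- In the discrete setting, the Barron-1 norm equals the Barron-∞ norm: for any finite collection of coefficients a_k with probability weights π_k, inf over equivalent representations of Σ_k π_k|a_k| equals inf over equivalent representations of max_k |a_k|, where representations (a, π) are equivalent if the weighted sums a_k π_k agree componentwise. Concretely: given c ∈ ℝ^m, the infimum of max_k |a_k| over all (a, π) with π a probability vector and a_k π_k = c_k for all k, equals Σ_k |c_k|. -/
import Mathlib


open Finset

theorem barron_one_eq_barron_infty (m : ℕ) (c : Fin m → ℝ) (hc : c ≠ 0) :
    sInf {t : ℝ | ∃ a π : Fin m → ℝ,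
        (∀ k, 0 ≤ π k) ∧ (∑ k, π k = 1) ∧ (∀ k, a k * π k = c k) ∧
        t = sSup {r : ℝ | ∃ k, 0 < π k ∧ r = |a k|}} = ∑ k, |c k| := by
  set T : ℝ := ∑ k, |c k| with hT
  obtain ⟨k0, hk0⟩ : ∃ k, c k ≠ 0 := by
    by_contra h
    push_neg at h
    exact hc (funext h)
  have hTpos : 0 < T := by
    apply Finset.sum_pos' (fun k _ => abs_nonneg _)
    exact ⟨k0, Finset.mem_univ _, abs_pos.mpr hk0⟩
  -- membership: T ∈ S
  have hmem : T ∈ {t : ℝ | ∃ a π : Fin m → ℝ,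
      (∀ k, 0 ≤ π k) ∧ (∑ k, π k = 1) ∧ (∀ k, a k * π k = c k) ∧
      t = sSup {r : ℝ | ∃ k, 0 < π k ∧ r = |a k|}} := by
    refine ⟨fun k => T * Real.sign (c k), fun k => |c k| / T, fun k => by positivity, ?_, ?_, ?_⟩
    · rw [← Finset.sum_div, ← hT, div_self hTpos.ne']
    · intro k
      dsimp only
      rcases lt_trichotomy (c k) 0 with h | h | h
      · rw [Real.sign_of_neg h, abs_of_neg h]
        field_simp
      · rw [h]; simp
      · rw [Real.sign_of_pos h, abs_of_pos h]
        field_simp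
    · have hset : {r : ℝ | ∃ k, 0 < |c k| / T ∧ r = |T * Real.sign (c k)|} = {T} := by
        ext r
        simp only [Set.mem_setOf_eq, Set.mem_singleton_iff]
        constructor
        · rintro ⟨k, hk, rfl⟩
          have hck : c k ≠ 0 := by
            intro h
            rw [h] at hk; simp at hk
          rw [abs_mul, abs_of_pos hTpos]
          rcases lt_or_gt_of_ne hck with h | h
          · rw [Real.sign_of_neg h]; simp
          · rw [Real.sign_of_pos h]; simp
        · rintro rfl
          refine ⟨k0, by positivity, ?_⟩
          rw [abs_mul, abs_of_pos hTpos]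
          rcases lt_or_gt_of_ne hk0 with h | h
          · rw [Real.sign_of_neg h]; simp
          · rw [Real.sign_of_pos h]; simp
      rw [hset, csSup_singleton]
  -- lower bound
  have hlb : ∀ t ∈ {t : ℝ | ∃ a π : Fin m → ℝ,
      (∀ k, 0 ≤ π k) ∧ (∑ k, π k = 1) ∧ (∀ k, a k * π k = c k) ∧
      t = sSup {r : ℝ | ∃ k, 0 < π k ∧ r = |a k|}}, T ≤ t := by
    rintro t ⟨a, π, hπ, hπ1, hac, rfl⟩
    set R : Set ℝ := {r : ℝ | ∃ k, 0 < π k ∧ r = |a k|} with hR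
    have hRne : R.Nonempty := by
      obtain ⟨k, -, hk⟩ : ∃ k ∈ Finset.univ, 0 < π k := by
        by_contra h
        push_neg at h
        have : ∑ k, π k = 0 := Finset.sum_eq_zero (fun k hk =>
          le_antisymm (h k hk) (hπ k))
        rw [hπ1] at this; norm_num at this
      exact ⟨|a k|, k, hk, rfl⟩
    have hRbdd : BddAbove R := by
      have : R ⊆ Set.range (fun k => |a k|) := by
        rintro r ⟨k, -, rfl⟩; exact ⟨k, rfl⟩
      exact (Set.finite_range _).bddAbove.mono this
    have hle : ∀ k, |a k| * π k ≤ sSup R * π k := by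
      intro k
      rcases (hπ k).eq_or_lt with h | h
      · rw [← h]; simp
      · exact mul_le_mul_of_nonneg_right (le_csSup hRbdd ⟨k, h, rfl⟩) (hπ k)
    calc T = ∑ k, |a k| * π k := by
            apply Finset.sum_congr rfl
            intro k _
            rw [← hac k, abs_mul, abs_of_nonneg (hπ k)]
      _ ≤ ∑ k, sSup R * π k := Finset.sum_le_sum (fun k _ => hle k)
      _ = sSup R := by rw [← Finset.mul_sum, hπ1, mul_one]
  exact le_antisymm (csInf_le ⟨T, hlb⟩ hmem) (le_csInf ⟨T, hmem⟩ hlb)
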